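/- Let X be a topological space and E ⊆ X. Then closure(E ∩ interior(closure E)) = closure(interior(closure E)); i.e., k(I ∧ ik) = kik as operations on subsets of X. -/
import Mathlib


/-- `k(I ∧ ik) = kik`: the closure of `E ∩ interior (closure E)` equals
`closure (interior (closure E))`. -/
theorem closure_inter_interior_closure (X : Type*) [TopologicalSpace X] (E : Set X) :
    closure (E ∩ interior (closure E)) = closure (interior (closure E)) := by
  apply Set.Subset.antisymm
  · exact closure_mono (Set.inter_subset_right)
  · apply closure_minimal _ isClosed_closure
    have h : interior (closure E) ∩ closure E ⊆ closure (interior (closure E) ∩ E) :=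
      isOpen_interior.inter_closure
    calc interior (closure E) = interior (closure E) ∩ closure E := by
          exact (Set.inter_eq_left.mpr interior_subset).symm
      _ ⊆ closure (interior (closure E) ∩ E) := h
      _ = closure (E ∩ interior (closure E)) := by rw [Set.inter_comm]
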